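/- For nonempty A, B ⊆ [n] and a uniformly random permutation π of [n], the probability that argmin_{a∈A} π(a) = argmin_{b∈B} π(b) equals |A ∩ B|/|A ∪ B|. -/

import Mathlib

open Finset

/-- The element of `U` on which `π` attains its minimum over `U`. -/
noncomputable def fmin {n : ℕ} (U : Finset (Fin n)) (hU : U.Nonempty)
    (π : Equiv.Perm (Fin n)) : Fin n :=
  π.symm ((U.image π).min' (hU.image π))

lemma apply_fmin {n : ℕ} (U : Finset (Fin n)) (hU : U.Nonempty) (π : Equiv.Perm (Fin n)) :
    π (fmin U hU π) = (U.image π).min' (hU.image π) :=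
  Equiv.apply_symm_apply _ _

lemma fmin_mem {n : ℕ} (U : Finset (Fin n)) (hU : U.Nonempty) (π : Equiv.Perm (Fin n)) :
    fmin U hU π ∈ U := by
  obtain ⟨a, ha, hEq⟩ := Finset.mem_image.1 ((U.image π).min'_mem (hU.image π))
  rw [fmin, ← hEq, Equiv.symm_apply_apply]
  exact ha

lemma image_swap_eq {n : ℕ} (U : Finset (Fin n)) {x y : Fin n} (hx : x ∈ U) (hy : y ∈ U) :
    U.image (Equiv.swap x y) = U := by
  apply Finset.eq_of_subset_of_card_le
  · intro z hz
    rcases Finset.mem_image.1 hz with ⟨a, ha, rfl⟩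
    rcases eq_or_ne a x with rfl | hax
    · simpa [Equiv.swap_apply_left] using hy
    rcases eq_or_ne a y with rfl | hay
    · simpa [Equiv.swap_apply_right] using hx
    · simpa [Equiv.swap_apply_of_ne_of_ne hax hay] using ha
  · rw [Finset.card_image_of_injective _ (Equiv.swap x y).injective]

lemma fmin_trans_swap {n : ℕ} (U : Finset (Fin n)) (hU : U.Nonempty)
    {x y : Fin n} (hx : x ∈ U) (hy : y ∈ U) (π : Equiv.Perm (Fin n)) :
    fmin U hU ((Equiv.swap x y).trans π) = Equiv.swap x y (fmin U hU π) := by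
  have himg : U.image ((Equiv.swap x y).trans π) = U.image π := by
    rw [show ⇑((Equiv.swap x y).trans π) = ⇑π ∘ ⇑(Equiv.swap x y) from rfl,
      ← Finset.image_image, image_swap_eq U hx hy]
  unfold fmin
  have hmin : (U.image ((Equiv.swap x y).trans π)).min'
      ((hU.image ((Equiv.swap x y).trans π)))
      = (U.image π).min' (hU.image π) := by
    congr 1
  rw [hmin, Equiv.symm_trans_apply, Equiv.symm_swap]

lemma fiber_card_eq {n : ℕ} (U : Finset (Fin n)) (hU : U.Nonempty)
    {x y : Fin n} (hx : x ∈ U) (hy : y ∈ U) :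
    (univ.filter fun π : Equiv.Perm (Fin n) => fmin U hU π = x).card
      = (univ.filter fun π : Equiv.Perm (Fin n) => fmin U hU π = y).card := by
  classical
  apply Finset.card_bij' (fun π _ => (Equiv.swap x y).trans π)
    (fun π _ => (Equiv.swap x y).trans π)
  · intro π hπ
    rw [Finset.mem_filter] at hπ ⊢
    refine ⟨Finset.mem_univ _, ?_⟩
    rw [fmin_trans_swap U hU hx hy, hπ.2, Equiv.swap_apply_left]
  · intro π hπ
    rw [Finset.mem_filter] at hπ ⊢
    refine ⟨Finset.mem_univ _, ?_⟩
    rw [fmin_trans_swap U hU hx hy, hπ.2, Equiv.swap_apply_right]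
  · intro π _
    ext a
    simp [Equiv.swap_apply_self]
  · intro π _
    ext a
    simp [Equiv.swap_apply_self]

lemma minhash_key {n : ℕ} (A B : Finset (Fin n)) (hA : A.Nonempty) (hB : B.Nonempty)
    (π : Equiv.Perm (Fin n)) :
    (A.image π).min' (hA.image π) = (B.image π).min' (hB.image π) ↔
      fmin (A ∪ B) hA.inl π ∈ A ∩ B := by
  set U : Finset (Fin n) := A ∪ B with hUdef
  have hU : U.Nonempty := hA.inl
  set m := (U.image π).min' (hU.image π) with hm
  have hπf : π (fmin U hU π) = m := apply_fmin U hU π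
  have hmA : m ≤ (A.image π).min' (hA.image π) :=
    Finset.min'_le _ _ (Finset.image_subset_image Finset.subset_union_left
      ((A.image π).min'_mem (hA.image π)))
  have hmB : m ≤ (B.image π).min' (hB.image π) :=
    Finset.min'_le _ _ (Finset.image_subset_image Finset.subset_union_right
      ((B.image π).min'_mem (hB.image π)))
  constructor
  · intro h
    have hmem : m ∈ A.image π ∪ B.image π := by
      rw [← Finset.image_union]; exact (U.image π).min'_mem (hU.image π)
    have hboth : m ∈ A.image π ∧ m ∈ B.image π := by
      rcases Finset.mem_union.1 hmem with hmem' | hmem'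
      · have heqA : (A.image π).min' (hA.image π) = m :=
          le_antisymm (Finset.min'_le _ _ hmem') hmA
        have heqB : (B.image π).min' (hB.image π) = m := h ▸ heqA
        exact ⟨heqA ▸ (A.image π).min'_mem (hA.image π),
          heqB ▸ (B.image π).min'_mem (hB.image π)⟩
      · have hle : (B.image π).min' (hB.image π) ≤ m := Finset.min'_le _ _ hmem'
        have heqB : (B.image π).min' (hB.image π) = m := le_antisymm hle hmB
        exact ⟨heqB ▸ (h ▸ (A.image π).min'_mem (hA.image π)),
          heqB ▸ (B.image π).min'_mem (hB.image π)⟩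
    obtain ⟨a, ha, haEq⟩ := Finset.mem_image.1 hboth.1
    obtain ⟨b, hb, hbEq⟩ := Finset.mem_image.1 hboth.2
    have hfa : fmin U hU π = a := by
      rw [fmin, ← hm, ← haEq, Equiv.symm_apply_apply]
    have hfb : fmin U hU π = b := by
      rw [fmin, ← hm, ← hbEq, Equiv.symm_apply_apply]
    exact Finset.mem_inter.2 ⟨hfa ▸ ha, hfb ▸ hb⟩
  · intro h
    have hfA : fmin U hU π ∈ A := (Finset.mem_inter.1 h).1
    have hfB : fmin U hU π ∈ B := (Finset.mem_inter.1 h).2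
    have h1 : (A.image π).min' (hA.image π) ≤ m := by
      rw [← hπf]; exact Finset.min'_le _ _ (Finset.mem_image_of_mem _ hfA)
    have h2 : (B.image π).min' (hB.image π) ≤ m := by
      rw [← hπf]; exact Finset.min'_le _ _ (Finset.mem_image_of_mem _ hfB)
    rw [le_antisymm h1 hmA, le_antisymm h2 hmB]

/-- For nonempty `A, B ⊆ [n]` and a uniformly random permutation `π` of `[n]`, the probability
that the `π`-minimizer of `A` equals the `π`-minimizer of `B` is `|A ∩ B| / |A ∪ B|`. -/
theorem minhash_agreement (n : ℕ) (A B : Finset (Fin n)) (hA : A.Nonempty) (hB : B.Nonempty) :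
    ((Finset.univ.filter (fun π : Equiv.Perm (Fin n) =>
        (A.image π).min' (hA.image π) = (B.image π).min' (hB.image π))).card : ℝ)
      / (Fintype.card (Equiv.Perm (Fin n)) : ℝ)
    = ((A ∩ B).card : ℝ) / (A ∪ B).card := by
  classical
  set U : Finset (Fin n) := A ∪ B with hUdef
  have hU : U.Nonempty := hA.inl
  obtain ⟨x0, hx0⟩ := id hU
  set c := (univ.filter fun π : Equiv.Perm (Fin n) => fmin U hU π = x0).card with hc
  have hevent : (Finset.univ.filter (fun π : Equiv.Perm (Fin n) =>
      (A.image π).min' (hA.image π) = (B.image π).min' (hB.image π)))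
      = univ.filter (fun π : Equiv.Perm (Fin n) => fmin U hU π ∈ A ∩ B) := by
    apply Finset.filter_congr
    intro π _
    exact minhash_key A B hA hB π
  have hfiber : ∀ x ∈ U,
      (univ.filter fun π : Equiv.Perm (Fin n) => fmin U hU π = x).card = c :=
    fun x hx => fiber_card_eq U hU hx hx0
  have h1 : (univ.filter (fun π : Equiv.Perm (Fin n) => fmin U hU π ∈ A ∩ B)).card
      = (A ∩ B).card * c := by
    rw [Finset.card_eq_sum_card_fiberwise
      (f := fmin U hU) (s := univ.filter (fun π : Equiv.Perm (Fin n) => fmin U hU π ∈ A ∩ B))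
      (t := A ∩ B) (fun π hπ => (Finset.mem_filter.1 hπ).2)]
    rw [Finset.sum_congr rfl (fun x hx => ?_), Finset.sum_const, smul_eq_mul]
    rw [Finset.filter_filter]
    rw [show (univ.filter fun π : Equiv.Perm (Fin n) =>
        fmin U hU π ∈ A ∩ B ∧ fmin U hU π = x)
        = univ.filter fun π : Equiv.Perm (Fin n) => fmin U hU π = x from
      Finset.filter_congr (fun π _ => ⟨fun h => h.2, fun h => ⟨h ▸ hx, h⟩⟩)]
    exact hfiber x (Finset.inter_subset_union hx)
  have h2 : Fintype.card (Equiv.Perm (Fin n)) = U.card * c := by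
    rw [← Finset.card_univ, Finset.card_eq_sum_card_fiberwise
      (f := fmin U hU) (t := U) (fun π _ => fmin_mem U hU π)]
    rw [Finset.sum_congr rfl (fun x hx => hfiber x hx), Finset.sum_const, smul_eq_mul]
  have hc0 : (c : ℝ) ≠ 0 := by
    have : 0 < Fintype.card (Equiv.Perm (Fin n)) := Fintype.card_pos
    rw [h2] at this
    exact_mod_cast Nat.pos_of_mul_pos_left (by rwa [mul_comm] at this) |>.ne'
  rw [hevent, h1, h2, Nat.cast_mul, Nat.cast_mul, mul_div_mul_right _ _ hc0]
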